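/- arXiv:0912.1279 — 6 statements merged into one kernel-verified Lean document; each statement's English description precedes it below -/
import Mathlib

section
/- For all nonnegative integers N, n, i, the identity ∑_{k=i}^{⌊(N−n)/2⌋} y^{k−i} · C(N, n+2k) · (1+y)^{N−n−2k} · (C(n+2k, k−i) − C(n+2k, k−i−1)) = ∑_{j=0}^{N−n−2i} y^j · (C(N,j)·C(N, n+2i+j) − C(N, j−1)·C(N, n+2i+j+1)) holds as an identity of polynomials in y (equivalently for every real/natural y). -/
/-- Binomial coefficient with integer lower index, zero when the lower index is negative. -/
def intChoose (a : ℕ) (b : ℤ) : ℕ := if 0 ≤ b then a.choose b.toNat else 0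

open Finset

noncomputable def bc (n k : ℤ) : ℝ :=
  if 0 ≤ k ∧ k ≤ n then (n.toNat.choose k.toNat : ℝ) else 0

lemma bc_zero {n k : ℤ} (h : ¬(0 ≤ k ∧ k ≤ n)) : bc n k = 0 := if_neg h

lemma bc_pascal {n : ℤ} (hn : 0 ≤ n) (k : ℤ) : bc (n + 1) k = bc n k + bc n (k - 1) := by
  rcases lt_trichotomy k 0 with hk | hk | hk
  · rw [bc_zero (by omega), bc_zero (by omega), bc_zero (by omega)]; ring
  · subst hk
    unfold bc
    rw [if_pos ⟨le_refl 0, by omega⟩, if_pos ⟨le_refl 0, hn⟩, if_neg (by omega)]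
    simp
  · rcases lt_trichotomy k (n + 1) with h2 | h2 | h2
    · -- 1 ≤ k ≤ n
      unfold bc
      rw [if_pos (by omega), if_pos (by omega), if_pos (by omega)]
      obtain ⟨a, ha⟩ : ∃ a : ℕ, n = (a : ℤ) := ⟨n.toNat, by omega⟩
      obtain ⟨b, hb⟩ : ∃ b : ℕ, k = (b : ℤ) + 1 := ⟨(k - 1).toNat, by omega⟩
      subst ha hb
      have e1 : ((a : ℤ) + 1).toNat = a + 1 := by omega
      have e2 : (((b : ℤ) + 1)).toNat = b + 1 := by omega
      have e3 : ((b : ℤ) + 1 - 1).toNat = b := by omega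
      have e4 : ((a : ℤ)).toNat = a := by omega
      rw [e1, e2, e3, e4, Nat.choose_succ_succ]
      push_cast; ring
    · subst h2
      rw [bc_zero (n := n) (k := n + 1) (by omega)]
      unfold bc
      rw [if_pos (by omega), if_pos (by omega)]
      have e1 : ((n : ℤ) + 1).toNat = n.toNat + 1 := by omega
      have e2 : ((n : ℤ) + 1 - 1).toNat = n.toNat := by omega
      rw [e1, e2, Nat.choose_self, Nat.choose_self]; norm_num
    · rw [bc_zero (by omega), bc_zero (by omega), bc_zero (by omega)]; ring

lemma bc_nat (N x : ℕ) : (N.choose x : ℝ) = bc N x := by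
  by_cases h : x ≤ N
  · rw [bc, if_pos (by constructor <;> omega)]
    simp
  · rw [bc_zero (by push_cast; omega), Nat.choose_eq_zero_of_lt (by omega)]; simp

lemma intChoose_cast (a : ℕ) (t : ℤ) : (intChoose a t : ℝ) = bc a t := by
  unfold intChoose
  by_cases h : 0 ≤ t
  · rw [if_pos h]
    by_cases h2 : t ≤ a
    · rw [bc, if_pos ⟨h, h2⟩]
      norm_num
    · rw [bc_zero (by omega), Nat.choose_eq_zero_of_lt (by omega)]; simp
  · rw [if_neg h, bc_zero (by omega)]; simp

noncomputable def Lterm (y : ℝ) (N : ℕ) (m : ℤ) (k : ℕ) : ℝ :=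
  y ^ k * bc N (m + 2 * k) * bc (m + 2 * k) k * (1 + y) ^ (((N : ℤ) - m - 2 * k).toNat)

noncomputable def Rterm (y : ℝ) (N : ℕ) (m : ℤ) (j : ℕ) : ℝ :=
  y ^ j * bc N j * bc N (m + j)

lemma Lterm_zero {y : ℝ} {N : ℕ} {m : ℤ} {k : ℕ} (h : N < k) : Lterm y N m k = 0 := by
  by_cases h1 : 0 ≤ m + 2 * (k : ℤ) ∧ m + 2 * (k : ℤ) ≤ N
  · have hz : bc (m + 2 * k) k = 0 := bc_zero (by omega)
    simp [Lterm, hz]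
  · have hz : bc N (m + 2 * k) = 0 := bc_zero h1
    simp [Lterm, hz]

lemma Rterm_zero {y : ℝ} {N : ℕ} {m : ℤ} {j : ℕ} (h : N < j) : Rterm y N m j = 0 := by
  have hz : bc N j = 0 := bc_zero (by omega)
  simp [Rterm, hz]

lemma Ls_stable (y : ℝ) (N : ℕ) (m : ℤ) {M : ℕ} (h : N + 1 ≤ M) :
    ∑ k ∈ range M, Lterm y N m k = ∑ k ∈ range (N + 1), Lterm y N m k := by
  refine (Finset.sum_subset (Finset.range_subset_range.2 h) ?_).symm
  intro x hx hnx
  simp only [Finset.mem_range] at hx hnx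
  exact Lterm_zero (by omega)

lemma Rs_stable (y : ℝ) (N : ℕ) (m : ℤ) {M : ℕ} (h : N + 1 ≤ M) :
    ∑ j ∈ range M, Rterm y N m j = ∑ j ∈ range (N + 1), Rterm y N m j := by
  refine (Finset.sum_subset (Finset.range_subset_range.2 h) ?_).symm
  intro x hx hnx
  simp only [Finset.mem_range] at hx hnx
  exact Rterm_zero (by omega)

lemma shiftL (y : ℝ) (N : ℕ) (m : ℤ) (M : ℕ) :
    ∑ k ∈ range (M + 1),
      y ^ k * bc N (m + 2 * k) * bc (m + 2 * k) ((k : ℤ) - 1) *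
        (1 + y) ^ (((N : ℤ) - m - 2 * k).toNat)
    = y * ∑ k ∈ range M, Lterm y N (m + 2) k := by
  rw [Finset.sum_range_succ', Finset.mul_sum]
  have h0 : bc (m + 2 * (0:ℕ)) ((0:ℕ) - 1 : ℤ) = 0 := bc_zero (by omega)
  rw [h0]
  simp only [mul_zero, zero_mul, add_zero]
  refine Finset.sum_congr rfl fun k _ => ?_
  unfold Lterm
  have e1 : m + 2 * ((k : ℤ) + 1) = m + 2 + 2 * k := by ring
  have e2 : ((k : ℕ) + 1 : ℕ) = k + 1 := rfl
  push_cast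
  rw [e1]
  have e3 : ((k : ℤ) + 1 - 1) = (k : ℤ) := by ring
  rw [e3]
  have e4 : ((N : ℤ) - m - 2 * ((k : ℤ) + 1)).toNat = ((N : ℤ) - (m + 2) - 2 * k).toNat := by
    omega
  rw [e4]
  ring

lemma shiftR (y : ℝ) (N : ℕ) (m : ℤ) (M : ℕ) :
    ∑ j ∈ range (M + 1), y ^ j * bc N ((j : ℤ) - 1) * bc N (m + j + 1)
    = y * ∑ j ∈ range M, Rterm y N (m + 2) j := by
  rw [Finset.sum_range_succ', Finset.mul_sum]
  have h0 : bc N ((0:ℕ) - 1 : ℤ) = 0 := bc_zero (by omega)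
  rw [h0]
  simp only [mul_zero, zero_mul, add_zero]
  refine Finset.sum_congr rfl fun j _ => ?_
  unfold Rterm
  push_cast
  have e3 : ((j : ℤ) + 1 - 1) = (j : ℤ) := by ring
  rw [e3]
  have e1 : m + ((j : ℤ) + 1) + 1 = m + 2 + j := by ring
  rw [e1]
  ring

lemma Lrec (y : ℝ) (N : ℕ) (m : ℤ) :
    ∑ k ∈ range (N + 2), Lterm y (N + 1) m k
    = (1 + y) * ∑ k ∈ range (N + 2), Lterm y N m k
      + ∑ k ∈ range (N + 2), Lterm y N (m - 1) k
      + y * ∑ k ∈ range (N + 1), Lterm y N (m + 1) k := by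
  have step1 : ∑ k ∈ range (N + 2), Lterm y (N + 1) m k
      = (1 + y) * ∑ k ∈ range (N + 2), Lterm y N m k
        + ∑ k ∈ range (N + 2),
            y ^ k * bc N (m - 1 + 2 * k) * bc (m + 2 * k) k *
              (1 + y) ^ (((N : ℤ) - (m - 1) - 2 * k).toNat) := by
    rw [Finset.mul_sum, ← Finset.sum_add_distrib]
    refine Finset.sum_congr rfl fun k _ => ?_
    unfold Lterm
    have hc : ((N + 1 : ℕ) : ℤ) = (N : ℤ) + 1 := by push_cast; ring
    rw [hc, bc_pascal (Nat.cast_nonneg N) (m + 2 * k)]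
    have e5 : m + 2 * (k : ℤ) - 1 = m - 1 + 2 * k := by ring
    rw [e5]
    rw [show ((N : ℤ) + 1 - m - 2 * k).toNat = ((N : ℤ) - (m - 1) - 2 * k).toNat from by omega]
    by_cases hA : 0 ≤ m + 2 * (k : ℤ) ∧ m + 2 * (k : ℤ) ≤ N
    · rw [show ((N : ℤ) - (m - 1) - 2 * k).toNat = ((N : ℤ) - m - 2 * k).toNat + 1 from by
        omega, pow_succ]
      ring
    · rw [bc_zero hA]
      ring
  rw [step1]
  have step2 : ∑ k ∈ range (N + 2),
      y ^ k * bc N (m - 1 + 2 * k) * bc (m + 2 * k) k *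
        (1 + y) ^ (((N : ℤ) - (m - 1) - 2 * k).toNat)
      = ∑ k ∈ range (N + 2), Lterm y N (m - 1) k
        + ∑ k ∈ range (N + 2),
            y ^ k * bc N (m - 1 + 2 * k) * bc (m - 1 + 2 * k) ((k : ℤ) - 1) *
              (1 + y) ^ (((N : ℤ) - (m - 1) - 2 * k).toNat) := by
    rw [← Finset.sum_add_distrib]
    refine Finset.sum_congr rfl fun k _ => ?_
    unfold Lterm
    by_cases hB : 0 ≤ m - 1 + 2 * (k : ℤ) ∧ m - 1 + 2 * (k : ℤ) ≤ N
    · have hp : bc (m + 2 * k) k = bc (m - 1 + 2 * k) k + bc (m - 1 + 2 * k) ((k : ℤ) - 1) := by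
        have := bc_pascal (n := m - 1 + 2 * k) (by omega) k
        rw [show m - 1 + 2 * (k:ℤ) + 1 = m + 2 * k by ring] at this
        exact this
      rw [hp]; ring
    · have hz : bc N (m - 1 + 2 * k) = 0 := bc_zero hB
      rw [hz]; ring
  rw [step2]
  have step3 := shiftL y N (m - 1) (N + 1)
  rw [show m - 1 + 2 = m + 1 by ring] at step3
  rw [step3]
  ring

lemma Rrec (y : ℝ) (N : ℕ) (m : ℤ) :
    ∑ j ∈ range (N + 2), Rterm y (N + 1) m j
    = ∑ j ∈ range (N + 2), Rterm y N m j
      + ∑ j ∈ range (N + 2), Rterm y N (m - 1) j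
      + y * ∑ j ∈ range (N + 1), Rterm y N (m + 1) j
      + y * ∑ j ∈ range (N + 1), Rterm y N m j := by
  have expand : ∑ j ∈ range (N + 2), Rterm y (N + 1) m j
      = ∑ j ∈ range (N + 2), Rterm y N m j
        + ∑ j ∈ range (N + 2), Rterm y N (m - 1) j
        + ∑ j ∈ range (N + 2), y ^ j * bc N ((j : ℤ) - 1) * bc N ((m - 1) + j + 1)
        + ∑ j ∈ range (N + 2), y ^ j * bc N ((j : ℤ) - 1) * bc N ((m - 2) + j + 1) := by
    rw [← Finset.sum_add_distrib, ← Finset.sum_add_distrib, ← Finset.sum_add_distrib]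
    refine Finset.sum_congr rfl fun j _ => ?_
    unfold Rterm
    have hc : ((N + 1 : ℕ) : ℤ) = (N : ℤ) + 1 := by push_cast; ring
    rw [hc, bc_pascal (Nat.cast_nonneg N) j, bc_pascal (Nat.cast_nonneg N) (m + j)]
    have e1 : m + (j : ℤ) - 1 = m - 1 + j := by ring
    have e2 : m - 1 + (j : ℤ) + 1 = m + j := by ring
    have e3 : m - 2 + (j : ℤ) + 1 = m - 1 + j := by ring
    rw [e1, e2, e3]
    ring
  rw [expand, shiftR y N (m - 1) (N + 1), shiftR y N (m - 2) (N + 1)]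
  rw [show m - 1 + 2 = m + 1 by ring, show m - 2 + 2 = m by ring]

lemma main (y : ℝ) : ∀ (N : ℕ) (m : ℤ),
    ∑ k ∈ range (N + 1), Lterm y N m k = ∑ j ∈ range (N + 1), Rterm y N m j := by
  intro N
  induction N with
  | zero =>
    intro m
    rw [show (0:ℕ) + 1 = 1 from rfl, Finset.sum_range_one, Finset.sum_range_one]
    unfold Lterm Rterm
    by_cases hm : m = 0
    · subst hm
      norm_num [bc]
    · have hz : bc 0 m = 0 := bc_zero (by omega)
      push_cast
      norm_num [hz]
  | succ N ih =>
    intro m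
    have hL : ∑ k ∈ range (N + 1 + 1), Lterm y (N + 1) m k
        = (1 + y) * ∑ k ∈ range (N + 1), Lterm y N m k
          + ∑ k ∈ range (N + 1), Lterm y N (m - 1) k
          + y * ∑ k ∈ range (N + 1), Lterm y N (m + 1) k := by
      rw [Lrec y N m, Ls_stable y N m (M := N + 2) (by omega), Ls_stable y N (m - 1) (M := N + 2) (by omega)]
    rw [hL, ih m, ih (m - 1), ih (m + 1)]
    rw [Rrec y N m, Rs_stable y N m (M := N + 2) (by omega), Rs_stable y N (m - 1) (M := N + 2) (by omega)]
    ring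

theorem stmt0 (N n i : ℕ) (y : ℝ) :
    ∑ k ∈ Finset.Icc i ((N - n) / 2),
      y ^ (k - i) * (N.choose (n + 2 * k) : ℝ) * (1 + y) ^ (N - n - 2 * k) *
        ((intChoose (n + 2 * k) ((k : ℤ) - i) : ℝ) -
          (intChoose (n + 2 * k) ((k : ℤ) - i - 1) : ℝ))
    = ∑ j ∈ Finset.range (N - n - 2 * i + 1),
      y ^ j * ((N.choose j : ℝ) * (N.choose (n + 2 * i + j) : ℝ) -
        (intChoose N ((j : ℤ) - 1) : ℝ) * (N.choose (n + 2 * i + j + 1) : ℝ)) := by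
  set m : ℤ := (n : ℤ) + 2 * i with hm
  -- Step A: LHS to shifted range form
  have stepA : ∑ k ∈ Finset.Icc i ((N - n) / 2),
      y ^ (k - i) * (N.choose (n + 2 * k) : ℝ) * (1 + y) ^ (N - n - 2 * k) *
        ((intChoose (n + 2 * k) ((k : ℤ) - i) : ℝ) -
          (intChoose (n + 2 * k) ((k : ℤ) - i - 1) : ℝ))
      = ∑ k ∈ range ((N - n) / 2 + 1 - i),
          y ^ k * bc N (m + 2 * k) * (1 + y) ^ (((N : ℤ) - m - 2 * k).toNat) *
            (bc (m + 2 * k) k - bc (m + 2 * k) ((k : ℤ) - 1)) := by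
    rw [← Finset.Ico_add_one_right_eq_Icc, Finset.sum_Ico_eq_sum_range]
    refine Finset.sum_congr rfl fun k _ => ?_
    have c1 : (↑(i + k) : ℤ) - i = (k : ℤ) := by push_cast; ring
    have c2 : (↑(i + k) : ℤ) - i - 1 = (k : ℤ) - 1 := by push_cast; ring
    rw [c1, intChoose_cast, intChoose_cast, bc_nat]
    have c3 : ((n + 2 * (i + k) : ℕ) : ℤ) = m + 2 * k := by push_cast [hm]; ring
    rw [c3]
    have c4 : i + k - i = k := by omega
    rw [c4]
    have c5 : N - n - 2 * (i + k) = ((N : ℤ) - m - 2 * k).toNat := by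
      rw [hm]; omega
    rw [c5]
  rw [stepA]
  -- Step B: extend range to N + 2
  have stepB : ∑ k ∈ range ((N - n) / 2 + 1 - i),
      y ^ k * bc N (m + 2 * k) * (1 + y) ^ (((N : ℤ) - m - 2 * k).toNat) *
        (bc (m + 2 * k) k - bc (m + 2 * k) ((k : ℤ) - 1))
      = ∑ k ∈ range (N + 2),
          y ^ k * bc N (m + 2 * k) * (1 + y) ^ (((N : ℤ) - m - 2 * k).toNat) *
            (bc (m + 2 * k) k - bc (m + 2 * k) ((k : ℤ) - 1)) := by
    refine Finset.sum_subset (Finset.range_subset_range.2 (by omega)) ?_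
    intro x hx hnx
    simp only [Finset.mem_range] at hx hnx
    have hz : bc N (m + 2 * x) = 0 := bc_zero (by rw [hm]; push_cast; omega)
    rw [hz]; ring
  rw [stepB]
  -- Step C: split into Ls and shifted part
  have stepC : ∑ k ∈ range (N + 2),
      y ^ k * bc N (m + 2 * k) * (1 + y) ^ (((N : ℤ) - m - 2 * k).toNat) *
        (bc (m + 2 * k) k - bc (m + 2 * k) ((k : ℤ) - 1))
      = ∑ k ∈ range (N + 2), Lterm y N m k
        - y * ∑ k ∈ range (N + 1), Lterm y N (m + 2) k := by
    rw [← shiftL y N m (N + 1), ← Finset.sum_sub_distrib]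
    refine Finset.sum_congr rfl fun k _ => ?_
    unfold Lterm
    ring
  rw [stepC]
  -- Step D: RHS
  have stepD : ∑ j ∈ Finset.range (N - n - 2 * i + 1),
      y ^ j * ((N.choose j : ℝ) * (N.choose (n + 2 * i + j) : ℝ) -
        (intChoose N ((j : ℤ) - 1) : ℝ) * (N.choose (n + 2 * i + j + 1) : ℝ))
      = ∑ j ∈ range (N + 2),
          y ^ j * (bc N j * bc N (m + j) - bc N ((j : ℤ) - 1) * bc N (m + j + 1)) := by
    have conv1 : ∀ j : ℕ,
        y ^ j * ((N.choose j : ℝ) * (N.choose (n + 2 * i + j) : ℝ) -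
          (intChoose N ((j : ℤ) - 1) : ℝ) * (N.choose (n + 2 * i + j + 1) : ℝ))
        = y ^ j * (bc N j * bc N (m + j) - bc N ((j : ℤ) - 1) * bc N (m + j + 1)) := by
      intro j
      rw [intChoose_cast, bc_nat, bc_nat, bc_nat]
      have c1 : ((n + 2 * i + j : ℕ) : ℤ) = m + j := by push_cast [hm]; ring
      have c2 : ((n + 2 * i + j + 1 : ℕ) : ℤ) = m + j + 1 := by push_cast [hm]; ring
      rw [c1, c2]
    rw [Finset.sum_congr rfl fun j _ => conv1 j]
    refine Finset.sum_subset (Finset.range_subset_range.2 (by omega)) ?_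
    intro x hx hnx
    simp only [Finset.mem_range] at hx hnx
    have hz : bc N (m + x) = 0 := bc_zero (by rw [hm]; push_cast; omega)
    have hz2 : bc N (m + x + 1) = 0 := bc_zero (by rw [hm]; push_cast; omega)
    rw [hz, hz2]; ring
  rw [stepD]
  -- Step E: RHS split and finish
  have stepE : ∑ j ∈ range (N + 2),
      y ^ j * (bc N j * bc N (m + j) - bc N ((j : ℤ) - 1) * bc N (m + j + 1))
      = ∑ j ∈ range (N + 2), Rterm y N m j
        - y * ∑ j ∈ range (N + 1), Rterm y N (m + 2) j := by
    rw [← shiftR y N m (N + 1), ← Finset.sum_sub_distrib]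
    refine Finset.sum_congr rfl fun j _ => ?_
    unfold Rterm
    ring
  rw [stepE]
  rw [Ls_stable y N m (M := N + 2) (by omega), Rs_stable y N m (M := N + 2) (by omega)]
  rw [main y N m, main y N (m + 2)]
end

section
/- Carlitz's q-Stirling numbers of the second kind satisfy the closed formula S₂[N+1, k+1] = (1−q)^{−(N−k)} · ∑_{j=0}^{N−k} (−q)^j · C(N, k+j) · qbinom(k+j, j), valid for 0 ≤ k ≤ N, as an identity in the field of rational functions in q. -/
/-- Carlitz's q-Stirling numbers of the second kind, defined by the recurrence
`S₂[n+1,k+1] = S₂[n,k] + [k+1]_q S₂[n,k+1]`, in the field of rational functions in `q`. -/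
noncomputable def qStirling2 : ℕ → ℕ → RatFunc ℚ
  | 0, 0 => 1
  | 0, _ + 1 => 0
  | _ + 1, 0 => 0
  | n + 1, k + 1 => qStirling2 n k +
      (∑ i ∈ Finset.range (k + 1), (RatFunc.X : RatFunc ℚ) ^ i) * qStirling2 n (k + 1)

/-- The Gaussian q-binomial coefficient, via the q-Pascal recurrence. -/
noncomputable def qbinom : ℕ → ℕ → RatFunc ℚ
  | _, 0 => 1
  | 0, _ + 1 => 0
  | n + 1, k + 1 => qbinom n k + RatFunc.X ^ (k + 1) * qbinom n (k + 1)

lemma qbinom_zero (n : ℕ) : qbinom n 0 = 1 := by rw [qbinom]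

lemma qbinom_of_lt : ∀ n k, n < k → qbinom n k = 0
  | 0, k+1, _ => by rw [qbinom]
  | n+1, k+1, h => by
    rw [qbinom, qbinom_of_lt n k (by omega), qbinom_of_lt n (k+1) (by omega)]; ring

lemma qbinom_self : ∀ n, qbinom n n = 1
  | 0 => by rw [qbinom]
  | n+1 => by rw [qbinom, qbinom_self n, qbinom_of_lt n (n+1) (by omega)]; ring

lemma qbinom_one : ∀ n, qbinom n 1 = ∑ i ∈ Finset.range n, (RatFunc.X : RatFunc ℚ)^i
  | 0 => by rw [qbinom_of_lt 0 1 Nat.one_pos]; simp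
  | n+1 => by
    rw [qbinom, qbinom_one n, qbinom_zero, geom_sum_succ]
    ring

lemma qbinom_succ (n k : ℕ) :
    qbinom (n+1) (k+1) = qbinom n k + RatFunc.X ^ (k + 1) * qbinom n (k + 1) := by rw [qbinom]

lemma qbinom_dual : ∀ n k, k ≤ n →
    qbinom (n+1) (k+1) = RatFunc.X ^ (n - k) * qbinom n k + qbinom n (k+1)
  | 0, 0, _ => by
    rw [qbinom_succ, qbinom_self, qbinom_of_lt 0 1 Nat.one_pos]; simp
  | n+1, 0, _ => by
    rw [qbinom_succ, qbinom_one (n+1), qbinom_zero, Nat.sub_zero]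
    have g1 : ∑ i ∈ Finset.range (n+2), (RatFunc.X : RatFunc ℚ)^i
        = RatFunc.X * ∑ i ∈ Finset.range (n+1), (RatFunc.X : RatFunc ℚ)^i + 1 := geom_sum_succ
    have g2 : ∑ i ∈ Finset.range (n+2), (RatFunc.X : RatFunc ℚ)^i
        = RatFunc.X ^ (n+1) + ∑ i ∈ Finset.range (n+1), (RatFunc.X : RatFunc ℚ)^i := geom_sum_succ'
    linear_combination g2 - g1
  | n+1, k+1, h => by
    have hk : k ≤ n := by omega
    rcases Nat.lt_or_ge k n with hlt | hge
    · have e0 := qbinom_succ (n+1) (k+1)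
      have d1 := qbinom_dual n k hk
      have d2 := qbinom_dual n (k+1) hlt
      have s1 := qbinom_succ n k
      have s2 := qbinom_succ n (k+1)
      have e1 : (RatFunc.X : RatFunc ℚ) ^ (k+2) * RatFunc.X ^ (n - (k+1)) = RatFunc.X ^ (n+1) := by
        rw [← pow_add]; congr 1; omega
      have e2 : (RatFunc.X : RatFunc ℚ) ^ (n-k) * RatFunc.X ^ (k+1) = RatFunc.X ^ (n+1) := by
        rw [← pow_add]; congr 1; omega
      rw [show n + 1 - (k+1) = n - k from by omega]
      linear_combination e0 + d1 + (RatFunc.X : RatFunc ℚ)^(k+2) * d2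
        - (RatFunc.X : RatFunc ℚ)^(n-k) * s1 - s2
        + qbinom n (k+1) * e1 - qbinom n (k+1) * e2
    · have hkn : k = n := by omega
      subst hkn
      rw [qbinom_succ, qbinom_self, qbinom_of_lt (k+1) (k+2) (by omega),
        show k + 1 - (k+1) = 0 from by omega]
      simp

lemma qStirling2_of_lt : ∀ n k, n < k → qStirling2 n k = 0
  | 0, k+1, _ => by rw [qStirling2]
  | n+1, k+1, h => by
    rw [qStirling2, qStirling2_of_lt n k (by omega), qStirling2_of_lt n (k+1) (by omega)]; ring

lemma qStirling2_self : ∀ n, qStirling2 n n = 1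
  | 0 => by rw [qStirling2]
  | n+1 => by rw [qStirling2, qStirling2_self n, qStirling2_of_lt n (n+1) (by omega)]; ring

lemma qStirling2_one : ∀ n, qStirling2 (n+1) 1 = 1
  | 0 => by rw [qStirling2, qStirling2_self, qStirling2_of_lt 0 1 Nat.one_pos]; ring
  | n+1 => by
    rw [qStirling2, qStirling2_one n, show qStirling2 (n+1) 0 = 0 from rfl]
    simp

noncomputable def Gaux (N k : ℕ) : RatFunc ℚ :=
  ∑ j ∈ Finset.range (N - k + 1),
    (-RatFunc.X : RatFunc ℚ) ^ j * (N.choose (k + j) : RatFunc ℚ) * qbinom (k + j) j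

lemma Gaux_zero (N : ℕ) : Gaux N 0 = (1 - RatFunc.X : RatFunc ℚ)^N := by
  have h : (1 - RatFunc.X : RatFunc ℚ)^N = ((-RatFunc.X : RatFunc ℚ) + 1)^N := by ring_nf
  rw [h, add_pow, Gaux]
  refine Finset.sum_congr (by rw [Nat.sub_zero]) fun j hj => ?_
  rw [Nat.zero_add, qbinom_self, one_pow]
  ring

lemma Gaux_rec (N m : ℕ) (hm : m + 1 ≤ N) :
    Gaux (N+1) (m+1) = Gaux N m + (1 - RatFunc.X^(m+2)) * Gaux N (m+1) := by
  have hr1 : N + 1 - (m+1) + 1 = N - m + 1 := by omega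
  have hr2 : N - (m+1) + 1 = N - m := by omega
  -- split via Pascal
  have hA : Gaux (N+1) (m+1) =
      (∑ j ∈ Finset.range (N - m + 1),
        (-RatFunc.X : RatFunc ℚ) ^ j * (N.choose (m + j) : RatFunc ℚ) * qbinom (m + 1 + j) j)
      + (∑ j ∈ Finset.range (N - m + 1),
        (-RatFunc.X : RatFunc ℚ) ^ j * (N.choose (m + 1 + j) : RatFunc ℚ) * qbinom (m + 1 + j) j) := by
    rw [Gaux, hr1, ← Finset.sum_add_distrib]
    refine Finset.sum_congr rfl fun j _ => ?_
    rw [show m + 1 + j = (m + j) + 1 from by omega, Nat.choose_succ_succ]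
    push_cast
    ring
  -- second sum is Gaux N (m+1)
  have hB : (∑ j ∈ Finset.range (N - m + 1),
        (-RatFunc.X : RatFunc ℚ) ^ j * (N.choose (m + 1 + j) : RatFunc ℚ) * qbinom (m + 1 + j) j)
      = Gaux N (m+1) := by
    rw [show N - m + 1 = (N - m - 1 + 1) + 1 from by omega, Finset.sum_range_succ,
      show m + 1 + (N - m - 1 + 1) = N + 1 from by omega, Nat.choose_succ_self]
    rw [Gaux, hr2, show N - m = N - m - 1 + 1 from by omega]
    push_cast
    ring
  -- first sum
  have hA1 : (∑ j ∈ Finset.range (N - m + 1),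
        (-RatFunc.X : RatFunc ℚ) ^ j * (N.choose (m + j) : RatFunc ℚ) * qbinom (m + 1 + j) j)
      = Gaux N m - RatFunc.X^(m+2) * Gaux N (m+1) := by
    rw [Finset.sum_range_succ']
    simp only [Nat.add_zero, pow_zero, one_mul, qbinom_zero, mul_one]
    have hterm : ∀ i ∈ Finset.range (N - m),
        (-RatFunc.X : RatFunc ℚ) ^ (i+1) * (N.choose (m + (i+1)) : RatFunc ℚ) * qbinom (m + 1 + (i+1)) (i+1)
        = (- RatFunc.X^(m+2)) * ((-RatFunc.X : RatFunc ℚ) ^ i * (N.choose (m + 1 + i) : RatFunc ℚ) * qbinom (m + 1 + i) i)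
          + (- RatFunc.X) * ((-RatFunc.X : RatFunc ℚ) ^ i * (N.choose (m + 1 + i) : RatFunc ℚ) * qbinom (m + i + 1) (i+1)) := by
      intro i _
      rw [show m + 1 + (i + 1) = (m + 1 + i) + 1 from by omega,
        qbinom_dual (m + 1 + i) i (by omega),
        show m + 1 + i - i = m + 1 from by omega,
        show m + (i+1) = m + 1 + i from by omega,
        show m + i + 1 = m + 1 + i from by omega]
      ring
    rw [Finset.sum_congr rfl hterm, Finset.sum_add_distrib, ← Finset.mul_sum, ← Finset.mul_sum]
    have hGm1 : Gaux N (m+1) = ∑ i ∈ Finset.range (N - m),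
        (-RatFunc.X : RatFunc ℚ) ^ i * (N.choose (m + 1 + i) : RatFunc ℚ) * qbinom (m + 1 + i) i := by
      rw [Gaux, hr2]
    have hGm : Gaux N m = (N.choose m : RatFunc ℚ) + ∑ i ∈ Finset.range (N - m),
        (-RatFunc.X : RatFunc ℚ) ^ (i+1) * (N.choose (m + (i+1)) : RatFunc ℚ) * qbinom (m + (i+1)) (i+1) := by
      rw [Gaux, Finset.sum_range_succ']
      simp only [Nat.add_zero, pow_zero, one_mul, qbinom_zero, mul_one]
      ring
    rw [← hGm1]
    have : (∑ i ∈ Finset.range (N - m),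
        (-RatFunc.X : RatFunc ℚ) ^ i * (N.choose (m + 1 + i) : RatFunc ℚ) * qbinom (m + i + 1) (i+1))
        = ∑ i ∈ Finset.range (N - m),
        (-RatFunc.X : RatFunc ℚ) ^ i * (N.choose (m + (i+1)) : RatFunc ℚ) * qbinom (m + (i+1)) (i+1) := by
      refine Finset.sum_congr rfl fun i _ => ?_
      rw [show m + (i+1) = m + 1 + i from by omega, show m + i + 1 = m + 1 + i from by omega]
    rw [this]
    have hsum : (-RatFunc.X : RatFunc ℚ) * ∑ i ∈ Finset.range (N - m),
        (-RatFunc.X : RatFunc ℚ) ^ i * (N.choose (m + (i+1)) : RatFunc ℚ) * qbinom (m + (i+1)) (i+1)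
        = ∑ i ∈ Finset.range (N - m),
        (-RatFunc.X : RatFunc ℚ) ^ (i+1) * (N.choose (m + (i+1)) : RatFunc ℚ) * qbinom (m + (i+1)) (i+1) := by
      rw [Finset.mul_sum]
      refine Finset.sum_congr rfl fun i _ => ?_
      ring
    rw [hsum, hGm]
    ring
  rw [hA, hB, hA1]
  ring

lemma key : ∀ N k, k ≤ N →
    (1 - RatFunc.X : RatFunc ℚ)^(N-k) * qStirling2 (N+1) (k+1) = Gaux N k
  | 0, 0, _ => by
    rw [Nat.sub_zero, pow_zero, one_mul, qStirling2_self, Gaux]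
    simp [qbinom_zero]
  | N+1, 0, _ => by
    rw [Nat.sub_zero, qStirling2_one, mul_one, Gaux_zero]
  | N+1, k+1, h => by
    rcases Nat.lt_or_ge k N with hlt | hge
    · have hk1 : k + 1 ≤ N := hlt
      have h1 := key N k (by omega)
      have h2 := key N (k+1) hk1
      have hgeom : (1 - RatFunc.X : RatFunc ℚ) * (∑ i ∈ Finset.range (k+2), (RatFunc.X : RatFunc ℚ)^i)
          = 1 - RatFunc.X^(k+2) := by
        have := geom_sum_mul (RatFunc.X : RatFunc ℚ) (k+2)
        linear_combination -this
      have hpow : (1 - RatFunc.X : RatFunc ℚ)^(N-k) = (1 - RatFunc.X) * (1 - RatFunc.X)^(N-(k+1)) := by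
        rw [← pow_succ']
        congr 1
        omega
      rw [show qStirling2 (N+2) (k+2) = qStirling2 (N+1) (k+1) +
          (∑ i ∈ Finset.range (k + 2), (RatFunc.X : RatFunc ℚ) ^ i) * qStirling2 (N+1) (k + 2)
          from by rw [qStirling2]]
      rw [Gaux_rec N k hk1, show N + 1 - (k+1) = N - k from by omega, hpow]
      linear_combination h1 + (1 - RatFunc.X^(k+2)) * h2
        + (1 - RatFunc.X : RatFunc ℚ)^(N-(k+1)) * qStirling2 (N+1) (k+2) * hgeom
        - qStirling2 (N+1) (k+1) * hpow
    · have hkN : k = N := by omega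
      subst hkN
      rw [show k + 1 - (k+1) = 0 from by omega, pow_zero, one_mul, qStirling2_self, Gaux,
        show k + 1 - (k+1) = 0 from by omega]
      simp [qbinom_zero]

theorem stmt1 (N k : ℕ) (h : k ≤ N) :
    qStirling2 (N + 1) (k + 1) =
      ((1 - RatFunc.X : RatFunc ℚ) ^ (N - k))⁻¹ *
        ∑ j ∈ Finset.range (N - k + 1),
          (-RatFunc.X : RatFunc ℚ) ^ j * (N.choose (k + j) : RatFunc ℚ) * qbinom (k + j) j := by
  have h0 : (1 - RatFunc.X : RatFunc ℚ) ≠ 0 := by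
    have : (algebraMap (Polynomial ℚ) (RatFunc ℚ)) (1 - Polynomial.X) ≠ 0 := by
      rw [Ne, FaithfulSMul.algebraMap_eq_zero_iff]
      intro hx
      simpa using congrArg (Polynomial.eval 0) hx
    simpa using this
  have hkey : (1 - RatFunc.X : RatFunc ℚ)^(N-k) * qStirling2 (N+1) (k+1) = Gaux N k := key N k h
  rw [show (∑ j ∈ Finset.range (N - k + 1),
      (-RatFunc.X : RatFunc ℚ) ^ j * (N.choose (k + j) : RatFunc ℚ) * qbinom (k + j) j) = Gaux N k
      from rfl, ← hkey, inv_mul_cancel_left₀ (pow_ne_zero _ h0)]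
end

section
/- For any permutation σ of {1,…,n}, with σ̃ defined by σ̃(k) = n+1−σ^{−1}(n+1−k), the number of crossings of σ equals the number of crossings of σ̃, where a crossing of σ is a pair (i,j) with either i < j ≤ σ(i) < σ(j) or σ(i) < σ(j) < i < j. -/
/-- The reverse complement of the inverse of `σ`:  `σ̃(k) = n+1−σ⁻¹(n+1−k)`
(0-indexed: `σ̃(k) = rev (σ⁻¹ (rev k))`). -/
def tildePerm {n : ℕ} (σ : Equiv.Perm (Fin n)) : Equiv.Perm (Fin n) :=
  Fin.revPerm.trans (σ⁻¹.trans Fin.revPerm)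

/-- The number of crossings of `σ`: pairs `(i,j)` with `i < j ≤ σ(i) < σ(j)`
or `σ(i) < σ(j) < i < j`. -/
def crossings {n : ℕ} (σ : Equiv.Perm (Fin n)) : ℕ :=
  ((Finset.univ : Finset (Fin n × Fin n)).filter fun p =>
    (p.1 < p.2 ∧ p.2 ≤ σ p.1 ∧ σ p.1 < σ p.2) ∨
    (σ p.1 < σ p.2 ∧ σ p.2 < p.1 ∧ p.1 < p.2)).card

theorem stmt5 (n : ℕ) (σ : Equiv.Perm (Fin n)) :
    crossings σ = crossings (tildePerm σ) := by
  unfold crossings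
  apply Finset.card_bij' (fun p _ => ((σ p.2).rev, (σ p.1).rev))
    (fun p _ => (σ⁻¹ p.2.rev, σ⁻¹ p.1.rev))
  · intro p hp
    simp only [Finset.mem_filter, Finset.mem_univ, true_and] at hp ⊢
    simp only [tildePerm, Equiv.trans_apply, Fin.revPerm_apply, Fin.rev_rev,
      (show ∀ x, σ⁻¹ (σ x) = x from fun x => σ.symm_apply_apply x), Fin.rev_lt_rev, Fin.rev_le_rev]
    tauto
  · intro p hp
    simp only [Finset.mem_filter, Finset.mem_univ, true_and] at hp ⊢
    simp only [tildePerm, Equiv.trans_apply, Fin.revPerm_apply, Fin.rev_rev] at hp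
    simp only [(show ∀ x, σ (σ⁻¹ x) = x from fun x => σ.apply_symm_apply x)]
    simp only [Fin.rev_lt_rev]
    rw [← Fin.rev_lt_rev (i := σ⁻¹ p.1.rev) (j := σ⁻¹ p.2.rev),
      ← Fin.rev_le_rev (i := p.2.rev) (j := σ⁻¹ p.1.rev),
      ← Fin.rev_lt_rev (i := σ⁻¹ p.2.rev) (j := p.1.rev)]
    simp only [Fin.rev_rev]
    tauto
  · intro p hp; simp
  · intro p hp; simp
end

section
/- For any permutation σ of {1,…,n}, with σ̃ defined by σ̃(k) = n+1−σ^{−1}(n+1−k), the number of special left-to-right maxima of σ equals the number of special left-to-right maxima of σ̃, where j is a special left-to-right maximum if σ(j) = max_{1≤i≤j} σ(i) and σ(j) > σ(1). -/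
open scoped Classical

/-- The number of special left-to-right maxima of `σ`: indices `j` such that
`σ(j) = max_{i ≤ j} σ(i)` and `σ(j) > σ(1)` (0-indexed: `σ(j) > σ(0)`). -/
noncomputable def specialLRMax {n : ℕ} (σ : Equiv.Perm (Fin (n + 1))) : ℕ :=
  (Finset.univ.filter fun j : Fin (n + 1) =>
    (∀ i ≤ j, σ i ≤ σ j) ∧ σ 0 < σ j).card

theorem perm_inv_apply_self' {α : Type*} (σ : Equiv.Perm α) (x : α) : σ⁻¹ (σ x) = x :=
  σ.symm_apply_apply x

theorem perm_apply_inv_self' {α : Type*} (σ : Equiv.Perm α) (x : α) : σ (σ⁻¹ x) = x :=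
  σ.apply_symm_apply x

lemma tilde_apply {n : ℕ} (σ : Equiv.Perm (Fin n)) (i : Fin n) :
    tildePerm σ i = (σ⁻¹ i.rev).rev := by
  simp [tildePerm]

noncomputable def LRset {n : ℕ} (τ : Equiv.Perm (Fin (n + 1))) : Finset (Fin (n + 1)) :=
  Finset.univ.filter fun j => ∀ i ≤ j, τ i ≤ τ j

lemma lrmax_tilde {n : ℕ} (σ : Equiv.Perm (Fin (n + 1))) (j : Fin (n + 1)) :
    (∀ i ≤ Fin.rev (σ j), tildePerm σ i ≤ tildePerm σ (Fin.rev (σ j))) ↔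
    (∀ i ≤ j, σ i ≤ σ j) := by
  constructor
  · intro h i hij
    by_contra hc
    push_neg at hc
    have h1 : (σ i).rev ≤ (σ j).rev := Fin.rev_le_rev.mpr hc.le
    have h2 := h (σ i).rev h1
    rw [tilde_apply, tilde_apply, Fin.rev_rev, Fin.rev_rev,
      perm_inv_apply_self', perm_inv_apply_self', Fin.rev_le_rev] at h2
    have : i = j := le_antisymm hij h2
    exact absurd (this ▸ hc) (lt_irrefl _)
  · intro h i hik
    rw [tilde_apply, tilde_apply, Fin.rev_rev, perm_inv_apply_self', Fin.rev_le_rev]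
    set m := σ⁻¹ i.rev with hm
    by_contra hc
    push_neg at hc
    have h1 : σ m ≤ σ j := h m hc.le
    have h2 : σ j ≤ σ m := by
      have : σ m = i.rev := by rw [hm, perm_apply_inv_self']
      rw [this, ← Fin.rev_rev (σ j), Fin.rev_le_rev]
      exact hik
    have : m = j := σ.injective (le_antisymm h1 h2)
    exact absurd this hc.ne
  
lemma special_eq {n : ℕ} (τ : Equiv.Perm (Fin (n + 1))) :
    specialLRMax τ = (LRset τ).card - 1 := by
  have h0 : (0 : Fin (n + 1)) ∈ LRset τ := by
    simp only [LRset, Finset.mem_filter, Finset.mem_univ, true_and]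
    intro i hi
    rw [Fin.le_zero_iff] at hi
    rw [hi]
  have : (Finset.univ.filter fun j : Fin (n + 1) =>
      (∀ i ≤ j, τ i ≤ τ j) ∧ τ 0 < τ j) = (LRset τ).erase 0 := by
    ext j
    simp only [Finset.mem_filter, Finset.mem_univ, true_and, Finset.mem_erase, LRset]
    constructor
    · rintro ⟨h1, h2⟩
      refine ⟨fun hj => ?_, h1⟩
      subst hj; exact lt_irrefl _ h2
    · rintro ⟨hj, h1⟩
      refine ⟨h1, lt_of_le_of_ne (h1 0 (Fin.zero_le j)) fun he => hj (τ.injective he).symm⟩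
  rw [specialLRMax, this, Finset.card_erase_of_mem h0]

lemma lr_card {n : ℕ} (σ : Equiv.Perm (Fin (n + 1))) :
    (LRset σ).card = (LRset (tildePerm σ)).card := by
  apply Finset.card_bij (fun j _ => Fin.rev (σ j))
  · intro j hj
    simp only [LRset, Finset.mem_filter, Finset.mem_univ, true_and] at hj ⊢
    exact (lrmax_tilde σ j).mpr hj
  · intro a ha b hb hab
    exact σ.injective (Fin.rev_injective hab)
  · intro k hk
    refine ⟨σ⁻¹ k.rev, ?_, ?_⟩
    · simp only [LRset, Finset.mem_filter, Finset.mem_univ, true_and] at hk ⊢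
      have : Fin.rev (σ (σ⁻¹ k.rev)) = k := by rw [perm_apply_inv_self', Fin.rev_rev]
      rw [← lrmax_tilde σ (σ⁻¹ k.rev), this]
      exact hk
    · rw [perm_apply_inv_self', Fin.rev_rev]

theorem stmt6 (n : ℕ) (σ : Equiv.Perm (Fin (n + 1))) :
    specialLRMax σ = specialLRMax (tildePerm σ) := by
  rw [special_eq, special_eq, lr_card]
end

section
/- The generating function, with weight (1+y) per horizontal step and y per down-step, of Motzkin prefixes of length N and final height m (lattice paths with steps +1, 0, −1 staying nonnegative) equals ∑_{j=0}^{N−m} y^j (C(N,j)·C(N, m+j) − C(N, j−1)·C(N, m+j+1)). -/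
open scoped Classical

/-- A step: `0 ↦ −1` (down), `1 ↦ 0` (horizontal), `2 ↦ +1` (up). -/
def stepVal (a : Fin 3) : ℤ := (a : ℤ) - 1

/-- Height of a Motzkin-type path after `t` steps. -/
def mHt {m : ℕ} (f : Fin m → Fin 3) (t : ℕ) : ℤ :=
  ∑ s ∈ Finset.univ.filter (fun s : Fin m => s.val < t), stepVal (f s)

/-- Motzkin prefixes of length `N` with final height `e`. -/
noncomputable def motzkinPrefixes (N : ℕ) (e : ℤ) : Finset (Fin N → Fin 3) :=
  Finset.univ.filter fun f => (∀ t : ℕ, 0 ≤ mHt f t) ∧ mHt f N = e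

/-- Number of horizontal steps. -/
def hSteps {N : ℕ} (f : Fin N → Fin 3) : ℕ := (Finset.univ.filter fun s => f s = 1).card

/-- Number of down-steps. -/
def dSteps {N : ℕ} (f : Fin N → Fin 3) : ℕ := (Finset.univ.filter fun s => f s = 0).card

namespace Stmt12Aux

open Finset

lemma intChoose_succ (N : ℕ) (b : ℤ) :
    intChoose (N + 1) b = intChoose N b + intChoose N (b - 1) := by
  unfold intChoose
  rcases lt_trichotomy b 0 with h | h | h
  · rw [if_neg (by omega), if_neg (by omega), if_neg (by omega)]
  · subst h; norm_num
  · rw [if_pos (by omega), if_pos (by omega), if_pos (by omega)]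
    have hb : b.toNat = (b - 1).toNat + 1 := by omega
    rw [hb, Nat.choose_succ_succ']
    omega

lemma intChoose_eq_zero {N : ℕ} {b : ℤ} (h : b < 0 ∨ (N : ℤ) < b) : intChoose N b = 0 := by
  unfold intChoose
  rcases h with h | h
  · rw [if_neg (by omega)]
  · rcases le_or_gt 0 b with hb | hb
    · rw [if_pos hb, Nat.choose_eq_zero_of_lt (by omega)]
    · rw [if_neg (by omega)]

/-- The coefficient appearing in the formula. -/
noncomputable def cc (N : ℕ) (mm j : ℤ) : ℝ :=
  (intChoose N j : ℝ) * (intChoose N (mm + j) : ℝ)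
    - (intChoose N (j - 1) : ℝ) * (intChoose N (mm + j + 1) : ℝ)

lemma cc_neg_one (N : ℕ) (j : ℤ) : cc N (-1) j = 0 := by
  unfold cc
  rw [show (-1 : ℤ) + j + 1 = j by ring, show (-1 : ℤ) + j = j - 1 by ring]
  ring

lemma cc_zero_of_neg {N : ℕ} {mm j : ℤ} (h : j < 0) : cc N mm j = 0 := by
  unfold cc
  rw [intChoose_eq_zero (b := j) (Or.inl h), intChoose_eq_zero (b := j - 1) (Or.inl (by omega))]
  push_cast; ring

lemma cc_zero_of_gt {N : ℕ} {mm j : ℤ} (hm : -1 ≤ mm) (h : (N : ℤ) < j) : cc N mm j = 0 := by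
  rcases eq_or_lt_of_le hm with hm' | hm'
  · rw [← hm', cc_neg_one]
  · unfold cc
    rw [intChoose_eq_zero (b := j) (Or.inr h),
      intChoose_eq_zero (b := mm + j) (Or.inr (by omega)),
      intChoose_eq_zero (b := mm + j + 1) (Or.inr (by omega))]
    push_cast; ring

lemma cc_rec (N : ℕ) (mm j : ℤ) :
    cc (N + 1) mm j = cc N (mm - 1) j + cc N mm j + cc N mm (j - 1) + cc N (mm + 1) (j - 1) := by
  unfold cc
  simp only [intChoose_succ]
  rw [show mm + j + 1 - 1 = mm - 1 + j + 1 by ring, show mm + j - 1 = mm - 1 + j by ring]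
  rw [show mm + (j - 1) + 1 = mm + j by ring, show mm + (j - 1) = mm - 1 + j by ring]
  rw [show mm + 1 + (j - 1) + 1 = mm + j + 1 by ring, show mm + 1 + (j - 1) = mm + j by ring]
  push_cast
  ring

/-- Partial sum form of the right-hand side. -/
noncomputable def DD (y : ℝ) (N : ℕ) (mm : ℤ) : ℝ :=
  ∑ j ∈ range (N + 1), y ^ j * cc N mm (j : ℤ)

lemma DD_neg_one (y : ℝ) (N : ℕ) : DD y N (-1) = 0 := by
  unfold DD
  exact Finset.sum_eq_zero fun j _ => by rw [cc_neg_one, mul_zero]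

lemma DD_rec (y : ℝ) (N : ℕ) {mm : ℤ} (hm : 0 ≤ mm) :
    DD y (N + 1) mm = DD y N (mm - 1) + (1 + y) * DD y N mm + y * DD y N (mm + 1) := by
  unfold DD
  have hrec : ∀ j ∈ range (N + 2), y ^ j * cc (N + 1) mm (j : ℤ)
      = y ^ j * cc N (mm - 1) (j : ℤ) + y ^ j * cc N mm (j : ℤ)
        + y ^ j * cc N mm ((j : ℤ) - 1) + y ^ j * cc N (mm + 1) ((j : ℤ) - 1) := by
    intro j _; rw [cc_rec]; ring
  rw [Finset.sum_congr rfl hrec]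
  simp only [Finset.sum_add_distrib]
  have h1 : ∑ j ∈ range (N + 2), y ^ j * cc N (mm - 1) (j : ℤ)
      = ∑ j ∈ range (N + 1), y ^ j * cc N (mm - 1) (j : ℤ) := by
    rw [Finset.sum_range_succ, cc_zero_of_gt (by omega) (by push_cast; omega), mul_zero, add_zero]
  have h2 : ∑ j ∈ range (N + 2), y ^ j * cc N mm (j : ℤ)
      = ∑ j ∈ range (N + 1), y ^ j * cc N mm (j : ℤ) := by
    rw [Finset.sum_range_succ, cc_zero_of_gt (by omega) (by push_cast; omega), mul_zero, add_zero]
  have h3 : ∑ j ∈ range (N + 2), y ^ j * cc N mm ((j : ℤ) - 1)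
      = y * ∑ j ∈ range (N + 1), y ^ j * cc N mm (j : ℤ) := by
    rw [Finset.sum_range_succ' (fun j => y ^ j * cc N mm ((j : ℤ) - 1)) (N + 1)]
    rw [show ((0 : ℕ) : ℤ) - 1 = (-1 : ℤ) by norm_num, cc_zero_of_neg (by norm_num), mul_zero,
      add_zero, Finset.mul_sum]
    refine Finset.sum_congr rfl fun j _ => ?_
    rw [show ((j + 1 : ℕ) : ℤ) - 1 = (j : ℤ) by push_cast; ring]
    ring
  have h4 : ∑ j ∈ range (N + 2), y ^ j * cc N (mm + 1) ((j : ℤ) - 1)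
      = y * ∑ j ∈ range (N + 1), y ^ j * cc N (mm + 1) (j : ℤ) := by
    rw [Finset.sum_range_succ' (fun j => y ^ j * cc N (mm + 1) ((j : ℤ) - 1)) (N + 1)]
    rw [show ((0 : ℕ) : ℤ) - 1 = (-1 : ℤ) by norm_num, cc_zero_of_neg (by norm_num), mul_zero,
      add_zero, Finset.mul_sum]
    refine Finset.sum_congr rfl fun j _ => ?_
    rw [show ((j + 1 : ℕ) : ℤ) - 1 = (j : ℤ) by push_cast; ring]
    ring
  rw [h1, h2, h3, h4]
  ring

/-! Combinatorial side. -/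

noncomputable def LL (y : ℝ) (N : ℕ) (e : ℤ) : ℝ :=
  ∑ f ∈ motzkinPrefixes N e, (1 + y) ^ hSteps f * y ^ dSteps f

lemma mHt_ge {M : ℕ} (f : Fin M → Fin 3) {t : ℕ} (ht : M ≤ t) : mHt f t = mHt f M := by
  unfold mHt
  congr 1
  refine Finset.filter_congr fun s _ => ?_
  have h1 : s.val < t := lt_of_lt_of_le s.isLt ht
  have h2 : s.val < M := s.isLt
  simp [h1, h2]

lemma mHt_snoc {N : ℕ} (f : Fin N → Fin 3) (a : Fin 3) (t : ℕ) :
    mHt (Fin.snoc f a) t = mHt f t + if N < t then stepVal a else 0 := by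
  unfold mHt
  rw [Finset.sum_filter, Finset.sum_filter, Fin.sum_univ_castSucc]
  simp [Fin.snoc_castSucc, Fin.snoc_last]

lemma hSteps_snoc {N : ℕ} (f : Fin N → Fin 3) (a : Fin 3) :
    hSteps (Fin.snoc f a) = hSteps f + if a = 1 then 1 else 0 := by
  unfold hSteps
  rw [Finset.card_filter, Finset.card_filter, Fin.sum_univ_castSucc]
  simp [Fin.snoc_castSucc, Fin.snoc_last]

lemma dSteps_snoc {N : ℕ} (f : Fin N → Fin 3) (a : Fin 3) :
    dSteps (Fin.snoc f a) = dSteps f + if a = 0 then 1 else 0 := by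
  unfold dSteps
  rw [Finset.card_filter, Finset.card_filter, Fin.sum_univ_castSucc]
  simp [Fin.snoc_castSucc, Fin.snoc_last]

lemma mem_motzkin_snoc {N : ℕ} {e : ℤ} (he : 0 ≤ e) (f : Fin N → Fin 3) (a : Fin 3) :
    Fin.snoc f a ∈ motzkinPrefixes (N + 1) e ↔ f ∈ motzkinPrefixes N (e - stepVal a) := by
  simp only [motzkinPrefixes, Finset.mem_filter, Finset.mem_univ, true_and]
  constructor
  · rintro ⟨h1, h2⟩
    rw [mHt_snoc, if_pos (Nat.lt_succ_self N), mHt_ge f (Nat.le_succ N)] at h2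
    refine ⟨fun t => ?_, by omega⟩
    rcases le_or_gt t N with ht | ht
    · have := h1 t
      rwa [mHt_snoc, if_neg (by omega), add_zero] at this
    · rw [mHt_ge f (by omega)]
      have := h1 N
      rwa [mHt_snoc, if_neg (by omega), add_zero] at this
  · rintro ⟨h1, h2⟩
    constructor
    · intro t
      rw [mHt_snoc]
      split_ifs with h
      · rw [mHt_ge f (by omega : N ≤ t), h2]; omega
      · rw [add_zero]; exact h1 t
    · rw [mHt_snoc, if_pos (Nat.lt_succ_self N), mHt_ge f (Nat.le_succ N), h2]; ring

lemma motzkin_neg {N : ℕ} {e : ℤ} (h : e < 0) : motzkinPrefixes N e = ∅ := by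
  ext f
  simp only [motzkinPrefixes, Finset.mem_filter, Finset.mem_univ, true_and,
    Finset.notMem_empty, iff_false, not_and]
  intro h1 h2
  have := h1 N
  omega

lemma LL_neg (y : ℝ) {N : ℕ} {e : ℤ} (h : e < 0) : LL y N e = 0 := by
  rw [LL, motzkin_neg h, Finset.sum_empty]

lemma sum_snoc_fixed (y : ℝ) {N : ℕ} {e : ℤ} (he : 0 ≤ e) (a : Fin 3) :
    (∑ f : Fin N → Fin 3, if ((∀ t : ℕ, 0 ≤ mHt (Fin.snoc f a : Fin (N + 1) → Fin 3) t)
          ∧ mHt (Fin.snoc f a : Fin (N + 1) → Fin 3) (N + 1) = e)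
        then (1 + y) ^ hSteps (Fin.snoc f a : Fin (N + 1) → Fin 3)
          * y ^ dSteps (Fin.snoc f a : Fin (N + 1) → Fin 3) else 0)
      = ((1 + y) ^ (if a = 1 then 1 else 0) * y ^ (if a = 0 then 1 else 0))
          * LL y N (e - stepVal a) := by
  simp only [LL, motzkinPrefixes, Finset.sum_filter, Finset.mul_sum]
  refine Finset.sum_congr rfl fun f _ => ?_
  rw [mul_ite, mul_zero]
  have hmem := mem_motzkin_snoc he f a
  simp only [motzkinPrefixes, Finset.mem_filter, Finset.mem_univ, true_and] at hmem
  by_cases hc : (∀ t : ℕ, 0 ≤ mHt f t) ∧ mHt f N = e - stepVal a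
  · rw [if_pos hc, if_pos (hmem.mpr hc), hSteps_snoc, dSteps_snoc, pow_add, pow_add]
    ring
  · rw [if_neg hc, if_neg (fun hh => hc (hmem.mp hh))]

lemma LL_succ (y : ℝ) {N : ℕ} {e : ℤ} (he : 0 ≤ e) :
    LL y (N + 1) e = LL y N (e - 1) + (1 + y) * LL y N e + y * LL y N (e + 1) := by
  rw [LL, motzkinPrefixes, Finset.sum_filter]
  rw [← Equiv.sum_comp (Fin.snocEquiv (fun _ => Fin 3))
    (fun g => if ((∀ t : ℕ, 0 ≤ mHt g t) ∧ mHt g (N + 1) = e)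
      then (1 + y) ^ hSteps g * y ^ dSteps g else 0)]
  rw [Fintype.sum_prod_type]
  have key : ∀ p : Fin 3 × (Fin N → Fin 3),
      (Fin.snocEquiv (fun _ => Fin 3)) p = Fin.snoc p.2 p.1 := fun p => by
    ext i
    simp [Fin.snocEquiv]
  rw [Fin.sum_univ_three]
  have conv1 : ∀ a : Fin 3, (∑ f : Fin N → Fin 3,
      if ((∀ t : ℕ, 0 ≤ mHt ((Fin.snocEquiv (fun _ => Fin 3)) (a, f)) t)
          ∧ mHt ((Fin.snocEquiv (fun _ => Fin 3)) (a, f)) (N + 1) = e)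
        then (1 + y) ^ hSteps ((Fin.snocEquiv (fun _ => Fin 3)) (a, f))
          * y ^ dSteps ((Fin.snocEquiv (fun _ => Fin 3)) (a, f)) else 0)
      = ((1 + y) ^ (if a = 1 then 1 else 0) * y ^ (if a = 0 then 1 else 0))
          * LL y N (e - stepVal a) := by
    intro a
    have hk : ∀ f : Fin N → Fin 3,
        (Fin.snocEquiv (fun _ => Fin 3)) (a, f) = Fin.snoc f a := fun f => key (a, f)
    simp only [hk]
    exact sum_snoc_fixed y he a
  rw [conv1 0, conv1 1, conv1 2]
  have e0 : ((1 + y) ^ (if (0 : Fin 3) = 1 then 1 else 0)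
      * y ^ (if (0 : Fin 3) = 0 then 1 else 0)) = y := by
    rw [if_neg (by decide), if_pos rfl, pow_zero, pow_one, one_mul]
  have e1 : ((1 + y) ^ (if (1 : Fin 3) = 1 then 1 else 0)
      * y ^ (if (1 : Fin 3) = 0 then 1 else 0)) = 1 + y := by
    rw [if_pos rfl, if_neg (by decide), pow_zero, pow_one, mul_one]
  have e2 : ((1 + y) ^ (if (2 : Fin 3) = 1 then 1 else 0)
      * y ^ (if (2 : Fin 3) = 0 then 1 else 0)) = 1 := by
    rw [if_neg (by decide), if_neg (by decide), pow_zero, pow_zero, mul_one]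
  rw [e0, e1, e2]
  have s0 : stepVal 0 = -1 := by decide
  have s1 : stepVal 1 = 0 := by decide
  have s2 : stepVal 2 = 1 := by decide
  rw [s0, s1, s2, show e - -1 = e + 1 by ring, show e - 0 = e by ring]
  ring

lemma LL_zero (y : ℝ) (e : ℤ) : LL y 0 e = if e = 0 then 1 else 0 := by
  rw [LL, motzkinPrefixes]
  have hmHt : ∀ (f : Fin 0 → Fin 3) (t : ℕ), mHt f t = 0 := by
    intro f t
    unfold mHt
    apply Finset.sum_eq_zero
    intro s _
    exact absurd s.isLt (by omega)
  by_cases he : e = 0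
  · subst he
    rw [Finset.filter_true_of_mem (fun f _ => ⟨fun t => by rw [hmHt], hmHt f 0⟩)]
    have : ∀ f : Fin 0 → Fin 3, (1 + y) ^ hSteps f * y ^ dSteps f = 1 := by
      intro f
      have h1 : hSteps f = 0 := by
        unfold hSteps
        simp [Finset.filter_eq_empty_iff]
      have h2 : dSteps f = 0 := by
        unfold dSteps
        simp [Finset.filter_eq_empty_iff]
      rw [h1, h2]; norm_num
    rw [Finset.sum_congr rfl fun f _ => this f, Finset.sum_const, if_pos rfl]
    simp
  · rw [if_neg he]
    rw [Finset.filter_false_of_mem, Finset.sum_empty]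
    intro f _
    rw [not_and]
    intro _
    rw [hmHt]
    omega

lemma key_eq (y : ℝ) : ∀ (N : ℕ) (mm : ℤ), 0 ≤ mm → LL y N mm = DD y N mm := by
  intro N
  induction N with
  | zero =>
    intro mm hm
    rw [LL_zero, DD]
    rw [Finset.sum_range_one]
    unfold cc
    rw [pow_zero, one_mul]
    rw [show ((0 : ℕ) : ℤ) - 1 = (-1 : ℤ) by norm_num,
      intChoose_eq_zero (b := -1) (Or.inl (by norm_num)),
      show mm + ((0 : ℕ) : ℤ) = mm by push_cast; ring]
    have hc0 : intChoose 0 ((0 : ℕ) : ℤ) = 1 := by norm_num [intChoose]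
    rw [hc0]
    by_cases h : mm = 0
    · subst h
      have : intChoose 0 (0 : ℤ) = 1 := by norm_num [intChoose]
      rw [if_pos rfl, this]
      norm_num
    · rw [if_neg h]
      have : intChoose 0 mm = 0 :=
        intChoose_eq_zero (b := mm) (Or.inr (by push_cast; omega))
      rw [this]
      norm_num
  | succ N ih =>
    intro mm hm
    rw [LL_succ y hm, DD_rec y N hm]
    have h1 := ih mm hm
    have h2 := ih (mm + 1) (by omega)
    have h3 : LL y N (mm - 1) = DD y N (mm - 1) := by
      rcases eq_or_lt_of_le hm with hm' | hm'
      · have hmm : mm - 1 = -1 := by omega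
        rw [hmm, LL_neg y (by norm_num), DD_neg_one]
      · exact ih (mm - 1) (by omega)
    rw [h1, h2, h3]

end Stmt12Aux

open Stmt12Aux in
theorem stmt12 (N m : ℕ) (y : ℝ) :
    ∑ f ∈ motzkinPrefixes N m, (1 + y) ^ hSteps f * y ^ dSteps f
      = ∑ j ∈ Finset.range (N - m + 1),
          y ^ j * ((N.choose j : ℝ) * (N.choose (m + j) : ℝ)
            - (intChoose N ((j : ℤ) - 1) : ℝ) * (N.choose (m + j + 1) : ℝ)) := by
  have hL : ∑ f ∈ motzkinPrefixes N m, (1 + y) ^ hSteps f * y ^ dSteps f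
      = LL y N (m : ℤ) := rfl
  rw [hL, key_eq y N (m : ℤ) (by positivity), DD]
  have hmatch : ∀ j : ℕ, y ^ j * cc N (m : ℤ) (j : ℤ)
      = y ^ j * ((N.choose j : ℝ) * (N.choose (m + j) : ℝ)
          - (intChoose N ((j : ℤ) - 1) : ℝ) * (N.choose (m + j + 1) : ℝ)) := by
    intro j
    unfold cc
    have hnc : ∀ k : ℕ, intChoose N (k : ℤ) = N.choose k := by
      intro k; unfold intChoose; rw [if_pos (by positivity)]; simp
    have e2 : intChoose N ((m : ℤ) + (j : ℤ)) = N.choose (m + j) := by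
      rw [show (m : ℤ) + (j : ℤ) = ((m + j : ℕ) : ℤ) by push_cast; ring, hnc]
    have e3 : intChoose N ((m : ℤ) + (j : ℤ) + 1) = N.choose (m + j + 1) := by
      rw [show (m : ℤ) + (j : ℤ) + 1 = ((m + j + 1 : ℕ) : ℤ) by push_cast; ring, hnc]
    rw [hnc j, e2, e3]
  rw [Finset.sum_congr rfl fun j _ => hmatch j]
  symm
  apply Finset.sum_subset
  · apply Finset.range_subset_range.mpr
    omega
  · intro j hj1 hj2
    rw [Finset.mem_range] at hj1 hj2
    have hgt : N < m + j := by omega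
    rw [Nat.choose_eq_zero_of_lt hgt, Nat.choose_eq_zero_of_lt (show N < m + j + 1 by omega)]
    push_cast
    ring
end

section
/- Define the polynomials F_n(y) by the functional equation H(t,y) = 1 + t(L(t,y) − 1)H(t,y), where L(t,y) = ∑_{n≥0} ∑_k N(n,k) y^k t^n is the Narayana generating function (with N(0,0)=1) and H(t,y) = ∑_{n≥0} F_n(y) t^n. Then each F_n(y) is self-reciprocal: F_n(y) = y^n · F_n(1/y) for all n ≥ 2, as an identity of Laurent polynomials. -/
def narayana (n k : ℕ) : ℕ := n.choose k * n.choose (k - 1) / n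

open Polynomial Finset

lemma narayana_symm {n k : ℕ} (h1 : 1 ≤ k) (h2 : k ≤ n) :
    narayana n (n + 1 - k) = narayana n k := by
  unfold narayana
  congr 1
  have e1 : n + 1 - k = n - (k - 1) := by omega
  have e2 : n - (k - 1) - 1 = n - k := by omega
  rw [e1, e2, Nat.choose_symm (by omega), Nat.choose_symm h2, mul_comm]

noncomputable def narP (n : ℕ) : Polynomial ℚ :=
  ∑ k ∈ Finset.Icc 1 n, (narayana n k : Polynomial ℚ) * Polynomial.X ^ k

lemma narP_natDegree (n : ℕ) : (narP n).natDegree ≤ n := by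
  apply Polynomial.natDegree_sum_le_of_forall_le
  intro k hk
  simp only [Finset.mem_Icc] at hk
  calc ((narayana n k : Polynomial ℚ) * X ^ k).natDegree
      ≤ (narayana n k : Polynomial ℚ).natDegree + (X ^ k : Polynomial ℚ).natDegree :=
        natDegree_mul_le
    _ ≤ 0 + k := by
        gcongr
        · exact natDegree_natCast _ |>.le
        · exact natDegree_X_pow_le k
    _ ≤ n := by omega

lemma reflect_sum' {ι : Type*} (N : ℕ) (s : Finset ι) (f : ι → Polynomial ℚ) :
    reflect N (∑ k ∈ s, f k) = ∑ k ∈ s, reflect N (f k) := by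
  induction s using Finset.cons_induction with
  | empty => simp [reflect_zero]
  | cons a s ha ih => rw [Finset.sum_cons, reflect_add, ih, Finset.sum_cons]

lemma narP_reflect (n : ℕ) : reflect (n + 1) (narP n) = narP n := by
  unfold narP
  rw [reflect_sum']
  rw [show (∑ k ∈ Finset.Icc 1 n, reflect (n+1) ((narayana n k : Polynomial ℚ) * X ^ k))
      = ∑ k ∈ Finset.Icc 1 n, (narayana n (n+1-k) : Polynomial ℚ) * X ^ (n+1-k) from ?_]
  · apply Finset.sum_nbij' (fun k => n + 1 - k) (fun k => n + 1 - k)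
    · intro a ha; simp only [Finset.mem_Icc] at *; omega
    · intro a ha; simp only [Finset.mem_Icc] at *; omega
    · intro a ha; simp only [Finset.mem_Icc] at ha; omega
    · intro a ha; simp only [Finset.mem_Icc] at ha; omega
    · intro a ha; rfl
  · apply Finset.sum_congr rfl
    intro k hk
    simp only [Finset.mem_Icc] at hk
    rw [← C_eq_natCast, reflect_C_mul_X_pow, revAt_le (by omega : k ≤ n + 1),
      narayana_symm hk.1 hk.2, C_eq_natCast]

/-- If `H(t,y) = 1 + t(L(t,y) − 1)H(t,y)` where `L` is the Narayana generating
function, then the coefficients `F_n(y)` of `H` are self-reciprocal for `n ≥ 2`: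
`F_n(y) = y^n F_n(1/y)`, i.e. `F_n` equals its reflection at degree `n`. -/
theorem stmt14 (L H : PowerSeries (Polynomial ℚ))
    (hL0 : PowerSeries.coeff (R := Polynomial ℚ) 0 L = 1)
    (hL : ∀ n, 1 ≤ n → PowerSeries.coeff (R := Polynomial ℚ) n L
        = ∑ k ∈ Finset.Icc 1 n, (narayana n k : Polynomial ℚ) * Polynomial.X ^ k)
    (hH : H = 1 + PowerSeries.X * (L - 1) * H) :
    ∀ n, 2 ≤ n → PowerSeries.coeff (R := Polynomial ℚ) n H
        = Polynomial.reflect n (PowerSeries.coeff (R := Polynomial ℚ) n H) := by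
  -- coefficients of L - 1
  have hA : ∀ i, 1 ≤ i → PowerSeries.coeff (R := Polynomial ℚ) i (L - 1) = narP i := by
    intro i hi
    rw [map_sub, hL i hi, PowerSeries.coeff_one, if_neg (by omega)]
    simp [narP]
  have hA0 : PowerSeries.coeff (R := Polynomial ℚ) 0 (L - 1) = 0 := by
    rw [map_sub, hL0, PowerSeries.coeff_one]; simp
  have key : ∀ n, (PowerSeries.coeff (R := Polynomial ℚ) n H).natDegree ≤ n ∧
      Polynomial.reflect n (PowerSeries.coeff (R := Polynomial ℚ) n H)
        = PowerSeries.coeff (R := Polynomial ℚ) n H := by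
    intro n
    induction n using Nat.strong_induction_on with
    | _ n ih =>
      match n with
      | 0 =>
        have h0 : PowerSeries.coeff (R := Polynomial ℚ) 0 H = 1 := by
          conv_lhs => rw [hH]
          rw [map_add, PowerSeries.coeff_one, if_pos rfl, mul_assoc]
          rw [show (0:ℕ) = 0 + 0 from rfl, PowerSeries.coeff_mul]
          simp [PowerSeries.coeff_X]
        rw [h0]; simp
      | m + 1 =>
        have hrec : PowerSeries.coeff (R := Polynomial ℚ) (m+1) H
            = ∑ p ∈ Finset.HasAntidiagonal.antidiagonal m,
                PowerSeries.coeff (R := Polynomial ℚ) p.1 (L - 1)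
                  * PowerSeries.coeff (R := Polynomial ℚ) p.2 H := by
          conv_lhs => rw [hH]
          rw [map_add, PowerSeries.coeff_one, if_neg (by omega), mul_assoc,
            PowerSeries.coeff_succ_X_mul, PowerSeries.coeff_mul, zero_add]
        constructor
        · rw [hrec]
          apply Polynomial.natDegree_sum_le_of_forall_le
          intro p hp
          rw [Finset.HasAntidiagonal.mem_antidiagonal] at hp
          rcases Nat.eq_zero_or_pos p.1 with h1 | h1
          · rw [h1, hA0, zero_mul]; simp
          · rw [hA p.1 h1]
            calc (narP p.1 * PowerSeries.coeff (R := Polynomial ℚ) p.2 H).natDegree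
                ≤ (narP p.1).natDegree
                    + (PowerSeries.coeff (R := Polynomial ℚ) p.2 H).natDegree :=
                  Polynomial.natDegree_mul_le
              _ ≤ p.1 + p.2 := by
                  gcongr
                  · exact narP_natDegree _
                  · exact (ih p.2 (by omega)).1
              _ ≤ m + 1 := by omega
        · rw [hrec, reflect_sum']
          apply Finset.sum_congr rfl
          intro p hp
          rw [Finset.HasAntidiagonal.mem_antidiagonal] at hp
          rcases Nat.eq_zero_or_pos p.1 with h1 | h1
          · rw [h1, hA0, zero_mul, Polynomial.reflect_zero]
          · rw [hA p.1 h1]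
            have e : m + 1 = (p.1 + 1) + p.2 := by omega
            rw [e, Polynomial.reflect_mul _ _ (le_trans (narP_natDegree p.1) (by omega))
              (ih p.2 (by omega)).1, narP_reflect, (ih p.2 (by omega)).2]
  intro n hn
  exact (key n).2.symm
end
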